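/- Suppose for all z the two relations hold: L_2(z): F(z) ȳ(z) − A(z) y(qz) + G(z) y(z) = 0 and L_3(z): (z/q) F̄(z/q) y(z) + G(z/q) ȳ(z) − q c_1 c_2 B(z/q) ȳ(z/q) = 0, where F, F̄, G, A, B : K → K and c_1, c_2, q ∈ K with q ≠ 0. Then whenever G(z/q) ≠ 0, y satisfies the three-term relation A(z) F(z/q) y(qz) + q c_1 c_2 B(z/q) F(z) y(z/q) − { F(z/q) G(z) + F(z) V(z/q)/G(z/q) } y(z) = 0, where V(w) := q c_1 c_2 A(w) B(w) − w F(w) F̄(w). -/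

import Mathlib

/-- The `L₁` equation (3.12) for the direction `T₃ = T_{c₁} T_{d₁}` of the
q-Garnier system, obtained by eliminating `ȳ(z)` and `ȳ(z/q)` from
`L₂(z) = L₂(z/q) = L₃(z) = 0`. -/
theorem stmt_13 {K : Type*} [Field K] (q c₁ c₂ : K) (hq : q ≠ 0)
    (y ybar F Fbar G A B V : K → K)
    (hL2 : ∀ z, F z * ybar z - A z * y (q * z) + G z * y z = 0)
    (hL3 : ∀ z, (z / q) * Fbar (z / q) * y z + G (z / q) * ybar z
        - q * c₁ * c₂ * B (z / q) * ybar (z / q) = 0)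
    (hV : ∀ w, V w = q * c₁ * c₂ * A w * B w - w * F w * Fbar w) :
    ∀ z, G (z / q) ≠ 0 →
      A z * F (z / q) * y (q * z) + q * c₁ * c₂ * B (z / q) * F z * y (z / q)
        - (F (z / q) * G z + F z * V (z / q) / G (z / q)) * y z = 0 := by
  intro z hG
  have e2 := hL2 (z / q)
  rw [mul_div_cancel₀ z hq] at e2
  have e1 := hL2 z
  rw [mul_comm q z] at e1
  have e3 := hL3 z
  have hv := hV (z / q)
  field_simp
  linear_combination (-(F (z / q) * G (z / q))) * e1
    + F z * F (z / q) * e3 + q * c₁ * c₂ * B (z / q) * F z * e2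
    - F z * y z * hv
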